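/- With h as in the differential-rates example (h strictly decreasing and continuous on [0,∞) with range (μ, h(0)], where μ = lim_{π→∞} h(π)), constants r ≤ R with R > μ, define π̂ by: π̂ = 0 if h(0) < r; π̂ = h⁻¹(r) if h(1) ≤ r < h(0); π̂ = 1 if r < h(1) ≤ R; π̂ = h⁻¹(R) if R < h(1). Then π̂ ≥ 0, it satisfies h(π̂) ≤ R, and the optimality equation [r - h(π̂)]⁻ + π̂·[r - h(π̂)] + (R - r)·(π̂ - 1)⁺ = 0 holds, where x⁻ = max(-x,0) and x⁺ = max(x,0). -/

import Mathlib

open Set Filter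

theorem stmt_6 (h hinv : ℝ → ℝ) (μ r R : ℝ)
    (hcont : ContinuousOn h (Ici 0))
    (hanti : StrictAntiOn h (Ici 0))
    (hlim : Tendsto h atTop (nhds μ))
    (hinvspec : ∀ z, μ < z → z ≤ h 0 → 0 ≤ hinv z ∧ h (hinv z) = z)
    (hrR : r ≤ R) (hμR : μ < R)
    (πhat : ℝ)
    (hcase : (h 0 < r ∧ πhat = 0) ∨
             (h 1 ≤ r ∧ r < h 0 ∧ πhat = hinv r) ∨
             (r < h 1 ∧ h 1 ≤ R ∧ πhat = 1) ∨
             (R < h 1 ∧ πhat = hinv R)) :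
    0 ≤ πhat ∧ h πhat ≤ R ∧
      max (-(r - h πhat)) 0 + πhat * (r - h πhat) + (R - r) * max (πhat - 1) 0 = 0 := by
  have hmu : ∀ x : ℝ, 0 ≤ x → μ < h x := by
    intro x hx
    have h1 : μ ≤ h (x + 1) := by
      refine le_of_tendsto hlim ?_
      filter_upwards [eventually_ge_atTop (x + 1)] with t ht
      exact hanti.antitoneOn (by simp; linarith) (by simp; linarith) ht
    have h2 : h (x + 1) < h x := hanti hx (by simp; linarith) (by linarith)
    linarith
  rcases hcase with ⟨h1, h2⟩ | ⟨h1, h2, h3⟩ | ⟨h1, h2, h3⟩ | ⟨h1, h2⟩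
  · subst h2
    refine ⟨le_refl 0, by linarith, ?_⟩
    rw [max_eq_right (by linarith), max_eq_right (by norm_num)]
    ring
  · have hμr : μ < r := lt_of_lt_of_le (hmu 1 (by norm_num)) h1
    obtain ⟨hp0, hpe⟩ := hinvspec r hμr h2.le
    rw [h3]
    have hple : hinv r ≤ 1 := by
      by_contra hc
      push_neg at hc
      have := hanti (by norm_num) hp0 hc
      rw [hpe] at this; linarith
    refine ⟨hp0, by rw [hpe]; linarith, ?_⟩
    rw [hpe]
    simp only [sub_self, neg_zero, max_self, mul_zero, add_zero, zero_add]
    rw [max_eq_right (by linarith), mul_zero]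
  · subst h3
    refine ⟨by norm_num, h2, ?_⟩
    rw [max_eq_left (by linarith), max_eq_right (by norm_num)]
    ring
  · have hRle : R ≤ h 0 := le_of_lt (lt_trans h1 (hanti (mem_Ici.mpr (le_refl 0)) (by norm_num) (by norm_num)))
    obtain ⟨hp0, hpe⟩ := hinvspec R hμR hRle
    rw [h2]
    have hpge : 1 ≤ hinv R := by
      by_contra hc
      push_neg at hc
      have := hanti hp0 (by norm_num) hc
      rw [hpe] at this; linarith
    refine ⟨hp0, by rw [hpe], ?_⟩
    rw [hpe, max_eq_left (by linarith), max_eq_left (by linarith)]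
    ring
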